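/- arXiv:2508.11587 — 2 statements merged into one kernel-verified Lean document; each statement's English description precedes it below -/
import Mathlib

section
/- For n >= 1, the total number of ties over all parking functions of length n is (n-1)(n+1)^{n-2}. -/
/-- A parking function of length `n` as a word in `[n]^n` (0-indexed values): its
weakly increasing rearrangement `b` satisfies `b i ≤ i` (0-indexed). -/
def IsPF (n : ℕ) (α : Fin n → Fin n) : Prop :=
  ∃ σ : Equiv.Perm (Fin n),
    (∀ i j : Fin n, i ≤ j → α (σ i) ≤ α (σ j)) ∧
    ∀ i : Fin n, (α (σ i) : ℕ) ≤ (i : ℕ)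

instance (n : ℕ) : DecidablePred (IsPF n) := fun _ => by unfold IsPF; infer_instance

/-- The number of ties of a word: indices `i ∈ [n-1]` with `w i = w (i+1)`. -/
def tieCount (n : ℕ) (w : Fin n → Fin n) : ℕ :=
  (Finset.univ.filter
    (fun p : Fin n × Fin n => (p.1 : ℕ) + 1 = (p.2 : ℕ) ∧ w p.1 = w p.2)).card


open Finset

variable {n : ℕ}

/-- arc sum of length `k` ending at `e` (going downwards). -/
def arcSum (d : ZMod (n+1) → ℕ) (e : ZMod (n+1)) (k : ℕ) : ℕ :=
  ∑ i ∈ Finset.range k, d (e - (i : ℕ))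

def GoodPt (n : ℕ) (d : ZMod (n+1) → ℕ) (e : ZMod (n+1)) : Prop :=
  ∀ k, 1 ≤ k → k ≤ n → arcSum d e k < k

/-- cumulative counts going down from 0 -/
def cum (d : ZMod (n+1) → ℕ) (m : ℕ) : ℕ :=
  ∑ i ∈ Finset.range m, d (-(i : ℕ))

def walk (d : ZMod (n+1) → ℕ) (m : ℕ) : ℤ := (m : ℤ) - cum d m

lemma arcSum_full (d : ZMod (n+1) → ℕ) (e : ZMod (n+1)) :
    arcSum d e (n+1) = ∑ s, d s := by
  unfold arcSum
  refine Finset.sum_nbij' (fun i => e - (i : ℕ)) (fun s => (e - s).val) ?_ ?_ ?_ ?_ ?_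
  · intro i hi; exact Finset.mem_univ _
  · intro s hs; simp only [Finset.mem_range]; exact ZMod.val_lt _
  · intro i hi
    simp only [Finset.mem_range] at hi
    show (e - (e - (i:ℕ))).val = i
    rw [sub_sub_cancel, ZMod.val_cast_of_lt hi]
  · intro s hs
    show e - (((e - s).val : ℕ) : ZMod (n+1)) = s
    rw [ZMod.natCast_val, ZMod.cast_id, sub_sub_cancel]
  · intro i hi; rfl

lemma cum_add (d : ZMod (n+1) → ℕ) (j k : ℕ) :
    cum d (j + k) = cum d j + arcSum d (-(j:ℕ)) k := by
  unfold cum arcSum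
  rw [Finset.sum_range_add]
  congr 1
  refine Finset.sum_congr rfl fun i _ => ?_
  congr 1
  push_cast
  ring

lemma walk_period (d : ZMod (n+1) → ℕ) (hd : ∑ s, d s = n) (m : ℕ) :
    walk d (m + (n+1)) = walk d m + 1 := by
  unfold walk
  rw [cum_add, arcSum_full, hd]
  push_cast
  ring

lemma goodPt_iff_walk (d : ZMod (n+1) → ℕ) (j : ℕ) :
    GoodPt n d (-(j:ℕ)) ↔ ∀ k, 1 ≤ k → k ≤ n → walk d j < walk d (j + k) := by
  unfold GoodPt walk
  refine forall_congr' fun k => ?_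
  refine imp_congr_right fun _ => imp_congr_right fun _ => ?_
  rw [cum_add]
  constructor
  · intro h; push_cast; omega
  · intro h
    have : (j:ℤ) - cum d j < (j + k : ℤ) - (cum d j + arcSum d (-(j:ℕ)) k) := by
      push_cast at h ⊢; omega
    omega

lemma walk_ge_min (d : ZMod (n+1) → ℕ) (hd : ∑ s, d s = n) (μ : ℤ)
    (hμ : ∀ m < n + 1, μ ≤ walk d m) : ∀ m, μ ≤ walk d m := by
  intro m
  induction m using Nat.strong_induction_on with
  | _ m ih =>
    by_cases hm : m < n + 1
    · exact hμ m hm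
    · have h1 : m - (n+1) + (n+1) = m := by omega
      have := walk_period d hd (m - (n+1))
      rw [h1] at this
      have := ih (m - (n+1)) (by omega)
      omega

theorem cycle_lemma (d : ZMod (n+1) → ℕ) (hd : ∑ s, d s = n) :
    ∃! e : ZMod (n+1), GoodPt n d e := by
  -- find the last minimizer of walk on [0, n+1)
  set F : Finset ℕ := (Finset.range (n+1)).filter
    (fun m => ∀ m' < n + 1, walk d m ≤ walk d m') with hF
  have hFne : F.Nonempty := by
    obtain ⟨m, hm, hmin⟩ := Finset.exists_min_image (Finset.range (n+1)) (walk d)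
      ⟨0, by simp⟩
    exact ⟨m, Finset.mem_filter.mpr ⟨hm, fun m' hm' => hmin m' (Finset.mem_range.mpr hm')⟩⟩
  set j := F.max' hFne with hj
  have hjF : j ∈ F := Finset.max'_mem F hFne
  rw [hF, Finset.mem_filter, Finset.mem_range] at hjF
  obtain ⟨hjlt, hjmin⟩ := hjF
  have hglobal : ∀ m, walk d j ≤ walk d m :=
    walk_ge_min d hd _ (fun m hm => hjmin m hm)
  -- strict above j
  have hstrict : ∀ m, j < m → walk d j < walk d m := by
    intro m
    induction m using Nat.strong_induction_on with
    | _ m ih =>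
      intro hjm
      by_cases hm : m < n + 1
      · rcases lt_or_eq_of_le (hglobal m) with h | h
        · exact h
        · exfalso
          have hmF : m ∈ F := by
            rw [hF, Finset.mem_filter, Finset.mem_range]
            exact ⟨hm, fun m' hm' => h ▸ hjmin m' hm'⟩
          have := Finset.le_max' F m hmF
          omega
      · have h1 : m - (n+1) + (n+1) = m := by omega
        have hp := walk_period d hd (m - (n+1))
        rw [h1] at hp
        have := hglobal (m - (n+1))
        omega
  have hjgood : GoodPt n d (-(j:ℕ)) := by
    rw [goodPt_iff_walk]
    intro k hk1 hkn
    exact hstrict (j + k) (by omega)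
  refine ⟨-(j:ℕ), hjgood, ?_⟩
  intro e he
  -- write e = -(j') with j' < n+1
  have hej : e = -(((-e).val : ℕ)) := by
    rw [ZMod.natCast_val, ZMod.cast_id, neg_neg]
  set j' := (-e).val with hj'
  have hj'lt : j' < n + 1 := ZMod.val_lt _
  rw [hej] at he
  rw [goodPt_iff_walk] at he
  rw [goodPt_iff_walk] at hjgood
  have : j' = j := by
    rcases lt_trichotomy j' j with h | h | h
    · exfalso
      have h1 : walk d j' < walk d (j' + (j - j')) := he (j - j') (by omega) (by omega)
      have h2 : walk d j < walk d (j + (j' + (n+1) - j)) := hjgood (j' + (n+1) - j) (by omega) (by omega)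
      have e1 : j' + (j - j') = j := by omega
      have e2 : j + (j' + (n+1) - j) = j' + (n+1) := by omega
      rw [e1] at h1
      rw [e2] at h2
      have := walk_period d hd j'
      omega
    · exact h
    · exfalso
      have h1 : walk d j < walk d (j + (j' - j)) := hjgood (j' - j) (by omega) (by omega)
      have h2 : walk d j' < walk d (j' + (j + (n+1) - j')) := he (j + (n+1) - j') (by omega) (by omega)
      have e1 : j + (j' - j) = j' := by omega
      have e2 : j' + (j + (n+1) - j') = j + (n+1) := by omega
      rw [e1] at h1
      rw [e2] at h2
      have := walk_period d hd j
      omega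
  rw [hej, this]

variable {n : ℕ}

def dcount (w : Fin n → ZMod (n+1)) (s : ZMod (n+1)) : ℕ :=
  (Finset.univ.filter (fun j => w j = s)).card

lemma sum_dcount (w : Fin n → ZMod (n+1)) : ∑ s, dcount w s = n := by
  have := Finset.card_eq_sum_card_fiberwise
    (f := w) (s := (Finset.univ : Finset (Fin n))) (t := Finset.univ)
    (fun x _ => Finset.mem_univ _)
  simpa [dcount] using this.symm

def PFW (n : ℕ) (w : Fin n → ZMod (n+1)) : Prop :=
  ∀ t, t < n → t + 1 ≤ (Finset.univ.filter (fun j => (w j).val ≤ t)).card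

lemma neg_one_sub_cast (i : ℕ) (hi : i ≤ n) :
    (-1 - (i:ℕ) : ZMod (n+1)) = ((n - i : ℕ) : ZMod (n+1)) := by
  have h1 : ((n:ℕ) : ZMod (n+1)) = -1 := by
    have : ((n+1 : ℕ) : ZMod (n+1)) = 0 := by
      simp [ZMod.natCast_self]
    push_cast at this
    linear_combination this
  rw [Nat.cast_sub hi, h1]

lemma arcSum_dcount (w : Fin n → ZMod (n+1)) (k : ℕ) (hk1 : 1 ≤ k) (hkn : k ≤ n) :
    arcSum (dcount w) (-1) k
      = (Finset.univ.filter (fun j => n + 1 - k ≤ (w j).val)).card := by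
  unfold arcSum
  have hmem : ∀ j : Fin n, (n + 1 - k ≤ (w j).val) ↔ ∃ i < k, w j = (-1 - (i:ℕ)) := by
    intro j
    constructor
    · intro h
      refine ⟨n - (w j).val, by omega, ?_⟩
      rw [neg_one_sub_cast _ (by omega)]
      have hv : n - (n - (w j).val) = (w j).val := by
        have := ZMod.val_lt (w j)
        omega
      rw [hv, ZMod.natCast_val, ZMod.cast_id]
    · rintro ⟨i, hik, hw⟩
      rw [hw, neg_one_sub_cast _ (by omega)]
      rw [ZMod.val_cast_of_lt (by omega)]
      omega
  -- sum of fiber counts over the arc = card of filter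
  rw [Finset.card_eq_sum_card_fiberwise
    (f := w) (s := Finset.univ.filter (fun j => n + 1 - k ≤ (w j).val))
    (t := (Finset.range k).image (fun i => (-1 - (i:ℕ) : ZMod (n+1))))
    (by
      intro j hj
      simp only [Finset.mem_coe, Finset.mem_filter, Finset.mem_univ, true_and] at hj
      rw [hmem] at hj
      obtain ⟨i, hik, hw⟩ := hj
      exact Finset.mem_image.mpr ⟨i, Finset.mem_range.mpr hik, hw.symm⟩)]
  rw [Finset.sum_image (by
    intro a ha b hb hab
    simp only [Finset.mem_coe, Finset.mem_range] at ha hb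
    have : ((a:ℕ) : ZMod (n+1)) = ((b:ℕ) : ZMod (n+1)) := by
      have hab' : (-1 - (a:ℕ) : ZMod (n+1)) = -1 - (b:ℕ) := hab
      linear_combination -hab'
    have := congrArg ZMod.val this
    rwa [ZMod.val_cast_of_lt (by omega), ZMod.val_cast_of_lt (by omega)] at this)]
  refine Finset.sum_congr rfl fun i hi => ?_
  simp only [Finset.mem_range] at hi
  unfold dcount
  rw [Finset.filter_filter]
  congr 1
  apply Finset.filter_congr
  intro j _
  constructor
  · exact fun h2 => ⟨(hmem j).mpr ⟨i, hi, h2⟩, h2⟩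
  · exact fun h => h.2

lemma pfw_iff_good (w : Fin n → ZMod (n+1)) :
    PFW n w ↔ GoodPt n (dcount w) (-1) := by
  have key : ∀ k, 1 ≤ k → k ≤ n →
      ((Finset.univ.filter (fun j => (w j).val ≤ n - k)).card
        + (Finset.univ.filter (fun j => n + 1 - k ≤ (w j).val)).card = n) := by
    intro k hk1 hkn
    have := Finset.card_filter_add_card_filter_not
      (s := (Finset.univ : Finset (Fin n))) (p := fun j => (w j).val ≤ n - k)
    rw [Finset.card_univ, Fintype.card_fin] at this
    have hc : (Finset.univ.filter (fun a => ¬ (w a).val ≤ n - k)).card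
        = (Finset.univ.filter (fun j => n + 1 - k ≤ (w j).val)).card := by
      congr 1
      apply Finset.filter_congr
      intro j _
      constructor <;> omega
    omega
  constructor
  · intro h k hk1 hkn
    rw [arcSum_dcount w k hk1 hkn]
    have h1 := h (n - k) (by omega)
    have h2 := key k hk1 hkn
    omega
  · intro h t ht
    have h1 := h (n - t) (by omega) (by omega)
    rw [arcSum_dcount w (n - t) (by omega) (by omega)] at h1
    have h2 := key (n - t) (by omega) (by omega)
    have e1 : n - (n - t) = t := by omega
    rw [e1] at h2
    omega
lemma isPF_iff_count (α : Fin n → Fin n) :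
    IsPF n α ↔ ∀ i : Fin n,
      (i : ℕ) + 1 ≤ (Finset.univ.filter (fun j => (α j : ℕ) ≤ (i : ℕ))).card := by
  constructor
  · rintro ⟨σ, hmono, hle⟩ i
    have hc : (Finset.Iic i).card ≤
        (Finset.univ.filter (fun j => (α j : ℕ) ≤ (i : ℕ))).card := by
      apply Finset.card_le_card_of_injOn σ
      · intro j hj
        simp only [Finset.mem_coe, Finset.mem_Iic] at hj
        simp only [Finset.mem_coe, Finset.mem_filter, Finset.mem_univ, true_and]
        calc (α (σ j) : ℕ) ≤ (α (σ i) : ℕ) := hmono j i hj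
        _ ≤ (i : ℕ) := hle i
      · exact σ.injective.injOn
    rw [Fin.card_Iic] at hc
    exact hc
  · intro h
    refine ⟨Tuple.sort α, fun i j hij => Tuple.monotone_sort α hij, ?_⟩
    intro i
    by_contra hlt
    push_neg at hlt
    set σ := Tuple.sort α with hσ
    have hcard : (Finset.univ.filter (fun j => (α j : ℕ) ≤ (i : ℕ))).card
        = (Finset.univ.filter (fun j => (α (σ j) : ℕ) ≤ (i : ℕ))).card := by
      rw [Finset.card_filter, Finset.card_filter]
      exact (Equiv.sum_comp σ (fun j => if (α j : ℕ) ≤ (i : ℕ) then 1 else 0)).symm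
  -- the filtered set is inside Iio i
    have hsub : (Finset.univ.filter (fun j => (α (σ j) : ℕ) ≤ (i : ℕ)))
        ⊆ Finset.Iio i := by
      intro j hj
      simp only [Finset.mem_filter, Finset.mem_univ, true_and] at hj
      rw [Finset.mem_Iio]
      by_contra hji
      push_neg at hji
      have := Tuple.monotone_sort α hji
      have h2 : (α (σ i) : ℕ) ≤ (α (σ j) : ℕ) := this
      omega
    have hle2 := Finset.card_le_card hsub
    rw [Fin.card_Iio] at hle2
    have := h i
    omega

def castw (α : Fin n → Fin n) : Fin n → ZMod (n+1) := fun j => ((α j : ℕ) : ZMod (n+1))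

lemma castw_val (α : Fin n → Fin n) (j : Fin n) : (castw α j).val = (α j : ℕ) :=
  ZMod.val_cast_of_lt (by have := (α j).isLt; omega)

lemma isPF_iff_pfw (α : Fin n → Fin n) : IsPF n α ↔ PFW n (castw α) := by
  rw [isPF_iff_count]
  constructor
  · intro h t ht
    have := h ⟨t, ht⟩
    simp only at this
    refine le_trans this (le_of_eq ?_)
    congr 1
    apply Finset.filter_congr
    intro j _
    rw [castw_val]
  · intro h i
    have := h (i : ℕ) i.isLt
    refine le_trans this (le_of_eq ?_)
    congr 1
    apply Finset.filter_congr
    intro j _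
    rw [castw_val]

lemma dcount_shift (w : Fin n → ZMod (n+1)) (c s : ZMod (n+1)) :
    dcount (fun j => w j + c) s = dcount w (s - c) := by
  unfold dcount
  congr 1
  apply Finset.filter_congr
  intro j _
  exact eq_sub_iff_add_eq.symm

lemma good_shift (w : Fin n → ZMod (n+1)) (c e : ZMod (n+1)) :
    GoodPt n (dcount (fun j => w j + c)) e ↔ GoodPt n (dcount w) (e - c) := by
  have hs : ∀ k, arcSum (dcount (fun j => w j + c)) e k = arcSum (dcount w) (e - c) k := by
    intro k
    unfold arcSum
    refine Finset.sum_congr rfl fun i _ => ?_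
    rw [dcount_shift, sub_right_comm]
  unfold GoodPt
  exact forall_congr' fun k => imp_congr_right fun _ => imp_congr_right fun _ => by rw [hs]

lemma pollak (w : Fin n → ZMod (n+1)) : ∃! c : ZMod (n+1), PFW n (fun j => w j + c) := by
  obtain ⟨e, he, hu⟩ := cycle_lemma (dcount w) (sum_dcount w)
  refine ⟨-1 - e, ?_, ?_⟩
  · show PFW n (fun j => w j + (-1 - e))
    rw [pfw_iff_good, good_shift]
    have h1 : (-1 : ZMod (n+1)) - (-1 - e) = e := by ring
    rw [h1]
    exact he
  · intro c hc
    rw [pfw_iff_good, good_shift] at hc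
    have := hu _ hc
    linear_combination -this

lemma card_T (p1 p2 : Fin n) (hne : p1 ≠ p2) :
    (Finset.univ.filter (fun w : Fin n → ZMod (n+1) => w p1 = w p2)).card
      = (n+1)^(n-1) := by
  rw [← Fintype.card_subtype]
  have e : {w : Fin n → ZMod (n+1) // w p1 = w p2} ≃ ({j : Fin n // ¬ j = p2} → ZMod (n+1)) :=
    { toFun := fun w j => w.1 j.1
      invFun := fun g => ⟨fun j => if h : j = p2 then g ⟨p1, hne⟩ else g ⟨j, h⟩, by
        simp [hne]⟩
      left_inv := by
        rintro ⟨w, hw⟩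
        ext j
        simp only
        by_cases h : j = p2
        · subst h
          rw [dif_pos rfl, hw]
        · rw [dif_neg h]
      right_inv := by
        rintro g
        funext j
        obtain ⟨j, hj⟩ := j
        simp only
        rw [dif_neg hj] }
  rw [Fintype.card_congr e, Fintype.card_fun, ZMod.card]
  congr 1
  rw [Fintype.card_subtype_compl, Fintype.card_subtype_eq, Fintype.card_fin]

lemma card_S (p1 p2 : Fin n) (hp : (p1 : ℕ) + 1 = (p2 : ℕ)) :
    (Finset.univ.filter (fun α : Fin n → Fin n => IsPF n α ∧ α p1 = α p2)).card
      = (n+1)^(n-2) := by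
  have hn2 : 2 ≤ n := by have := p2.isLt; omega
  have hne : p1 ≠ p2 := by
    intro h
    rw [h] at hp
    omega
  set S := Finset.univ.filter (fun α : Fin n → Fin n => IsPF n α ∧ α p1 = α p2) with hS
  set T := Finset.univ.filter (fun w : Fin n → ZMod (n+1) => w p1 = w p2) with hT
  set Φ : (Fin n → Fin n) × ZMod (n+1) → (Fin n → ZMod (n+1)) :=
    fun q => fun j => castw q.1 j + q.2 with hΦ
  have key : ∀ q ∈ S ×ˢ (Finset.univ : Finset (ZMod (n+1))),
      PFW n (fun j => Φ q j + (-q.2)) := by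
    rintro ⟨α, c⟩ hq
    rw [Finset.mem_product, hS, Finset.mem_filter] at hq
    obtain ⟨⟨_, hPF, _⟩, _⟩ := hq
    have : (fun j => Φ (α, c) j + (-c)) = castw α := by
      funext j
      simp only [hΦ]
      ring
    rw [this]
    exact (isPF_iff_pfw α).mp hPF
  have hinj : Set.InjOn Φ ↑(S ×ˢ (Finset.univ : Finset (ZMod (n+1)))) := by
    rintro ⟨α, c⟩ hq ⟨α', c'⟩ hq' heq
    have h1 := key _ hq
    have h2 := key _ hq'
    simp only at h1 h2
    rw [heq] at h1
    have hcc : -c = -c' := (pollak (Φ (α', c'))).unique h1 h2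
    have hc : c = c' := by
      have := congrArg Neg.neg hcc
      simpa using this
    have hα : α = α' := by
      funext j
      have := congrFun heq j
      simp only [hΦ, hc] at this
      have h3 : castw α j = castw α' j := by
        have := add_right_cancel this
        exact this
      have h4 := congrArg ZMod.val h3
      rw [castw_val, castw_val] at h4
      exact Fin.ext h4
    rw [hα, hc]
  have himg : (S ×ˢ (Finset.univ : Finset (ZMod (n+1)))).image Φ = T := by
    apply Finset.Subset.antisymm
    · intro w hw
      rw [Finset.mem_image] at hw
      obtain ⟨⟨α, c⟩, hq, rfl⟩ := hw
      rw [Finset.mem_product, hS, Finset.mem_filter] at hq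
      obtain ⟨⟨_, _, heq⟩, _⟩ := hq
      rw [hT, Finset.mem_filter]
      refine ⟨Finset.mem_univ _, ?_⟩
      simp only [hΦ, castw]
      have heq' : α p1 = α p2 := heq
      rw [heq']
    · intro w hw
      rw [hT, Finset.mem_filter] at hw
      obtain ⟨-, hw⟩ := hw
      obtain ⟨c, hc, -⟩ := pollak w
      have hall : ∀ j, (w j + c).val < n := by
        have h1 := hc (n-1) (by omega)
        simp only at h1
        have huniv : Finset.univ.filter (fun j => ((w j + c)).val ≤ n - 1)
            = Finset.univ := by
          apply Finset.eq_univ_of_card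
          have h2 := Finset.card_le_univ
            (Finset.univ.filter (fun j => ((w j + c)).val ≤ n - 1))
          rw [Fintype.card_fin] at h2 ⊢
          omega
        intro j
        have hj := Finset.mem_univ j
        rw [← huniv, Finset.mem_filter] at hj
        omega
      set α : Fin n → Fin n := fun j => ⟨(w j + c).val, hall j⟩ with hα
      have hcast : castw α = fun j => w j + c := by
        funext j
        simp only [castw, hα]
        rw [ZMod.natCast_val, ZMod.cast_id]
      rw [Finset.mem_image]
      refine ⟨(α, -c), ?_, ?_⟩
      · rw [Finset.mem_product, hS, Finset.mem_filter]
        refine ⟨⟨Finset.mem_univ _, ?_, ?_⟩, Finset.mem_univ _⟩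
        · rw [isPF_iff_pfw, hcast]
          exact hc
        · apply Fin.ext
          simp only [hα, hw]
      · funext j
        simp only [hΦ]
        rw [congrFun hcast j]
        ring
  have hcard : S.card * (n+1) = (n+1)^(n-1) := by
    have h1 := Finset.card_image_of_injOn hinj
    rw [himg, Finset.card_product, Finset.card_univ, ZMod.card] at h1
    rw [← h1, card_T p1 p2 hne]
  have hpow : (n+1)^(n-1) = (n+1)^(n-2) * (n+1) := by
    rw [← pow_succ]
    congr 1
    omega
  rw [hpow] at hcard
  exact Nat.eq_of_mul_eq_mul_right (by omega) hcard

/-- For `n ≥ 1`, the total number of ties over all parking functions of length `n`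
is `(n-1)(n+1)^(n-2)`. -/
theorem total_ties_parking_functions (n : ℕ) (hn : 1 ≤ n) :
    ∑ α ∈ Finset.univ.filter (fun α : Fin n → Fin n => IsPF n α), tieCount n α =
      (n - 1) * (n + 1) ^ (n - 2) := by
  classical
  set P : Finset (Fin n × Fin n) :=
    Finset.univ.filter (fun p : Fin n × Fin n => (p.1 : ℕ) + 1 = (p.2 : ℕ)) with hP
  have hsplit : ∀ α : Fin n → Fin n,
      tieCount n α = ∑ p ∈ P, (if α p.1 = α p.2 then 1 else 0) := by
    intro α
    unfold tieCount
    rw [← Finset.filter_filter, Finset.card_filter]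
  rw [Finset.sum_congr rfl (fun α _ => hsplit α), Finset.sum_comm]
  have hinner : ∀ p ∈ P,
      (∑ α ∈ Finset.univ.filter (fun α : Fin n → Fin n => IsPF n α),
        if α p.1 = α p.2 then 1 else 0) = (n+1)^(n-2) := by
    intro p hp
    rw [hP, Finset.mem_filter] at hp
    rw [← Finset.card_filter, Finset.filter_filter]
    exact card_S p.1 p.2 hp.2
  rw [Finset.sum_congr rfl hinner, Finset.sum_const, smul_eq_mul]
  congr 1
  have hPcard : P.card = n - 1 := by
    rw [← Finset.card_range (n-1)]
    refine Finset.card_bij' (fun p (_ : p ∈ P) => ((p.1 : ℕ)))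
      (fun m (hm : m ∈ Finset.range (n-1)) =>
        ((⟨m, by have := Finset.mem_range.mp hm; omega⟩ : Fin n),
         (⟨m + 1, by have := Finset.mem_range.mp hm; omega⟩ : Fin n)))
      ?_ ?_ ?_ ?_
    · intro p hp
      have hp' := (Finset.mem_filter.mp hp).2
      have := p.2.isLt
      show (p.1 : ℕ) ∈ Finset.range (n-1)
      exact Finset.mem_range.mpr (by omega)
    · intro m hm
      exact Finset.mem_filter.mpr ⟨Finset.mem_univ _, rfl⟩
    · intro p hp
      have hp' := (Finset.mem_filter.mp hp).2
      apply Prod.ext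
      · apply Fin.ext; rfl
      · apply Fin.ext
        simp only
        omega
    · intro m hm
      rfl
  rw [hPcard]
end

section
/- For n >= 1, the total descent-top statistic over S_n satisfies sum_{w in S_n} dtop(w) = (n+1)!(n-1)/3, where dtop(w) = sum over descent positions i of w(i). -/
open Finset

lemma exists_perm_pair {α : Type*} [DecidableEq α] {a b a' b' : α}
    (hab : a ≠ b) (hab' : a' ≠ b') :
    ∃ ρ : Equiv.Perm α, ρ a = a' ∧ ρ b = b' := by
  have h1 : a' ≠ Equiv.swap a a' b := by
    by_cases hb : b = a'
    · subst hb
      rw [Equiv.swap_apply_right]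
      exact hab.symm
    · rw [Equiv.swap_apply_of_ne_of_ne hab.symm hb]
      exact Ne.symm hb
  refine ⟨(Equiv.swap (Equiv.swap a a' b) b') * (Equiv.swap a a'), ?_, ?_⟩
  · simp only [Equiv.Perm.mul_apply, Equiv.swap_apply_left]
    exact Equiv.swap_apply_of_ne_of_ne h1 hab'
  · simp only [Equiv.Perm.mul_apply, Equiv.swap_apply_left]

lemma fiber_card_eq {n : ℕ} (i j : Fin n) {a b a' b' : Fin n}
    (hab : a ≠ b) (hab' : a' ≠ b') :
    (Finset.univ.filter fun σ : Equiv.Perm (Fin n) => σ i = a ∧ σ j = b).card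
      = (Finset.univ.filter fun σ : Equiv.Perm (Fin n) => σ i = a' ∧ σ j = b').card := by
  obtain ⟨ρ, h1, h2⟩ := exists_perm_pair hab hab'
  apply Finset.card_bij (fun σ _ => ρ * σ)
  · rintro σ hσ
    simp only [mem_filter, mem_univ, true_and] at hσ ⊢
    simp [Equiv.Perm.mul_apply, hσ.1, hσ.2, h1, h2]
  · intro σ₁ _ σ₂ _ h
    exact mul_left_cancel h
  · intro τ hτ
    refine ⟨ρ⁻¹ * τ, ?_, by group⟩
    simp only [mem_filter, mem_univ, true_and] at hτ ⊢
    constructor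
    · simp only [Equiv.Perm.mul_apply]
      rw [hτ.1, ← h1]; simp
    · simp only [Equiv.Perm.mul_apply]
      rw [hτ.2, ← h2]; simp

lemma fiber_card {n : ℕ} {i j a b : Fin n} (hij : i ≠ j) (hab : a ≠ b) :
    (Finset.univ.filter fun σ : Equiv.Perm (Fin n) => σ i = a ∧ σ j = b).card
      = Nat.factorial (n - 2) := by
  have hn : 2 ≤ n := by
    rcases n with _ | _ | n
    · exact i.elim0
    · have hi := i.isLt; have hj := j.isLt
      exact absurd (Fin.ext (by omega)) hij
    · omega
  have key : ∑ p ∈ (Finset.univ : Finset (Fin n)).offDiag,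
      (Finset.univ.filter fun σ : Equiv.Perm (Fin n) => σ i = p.1 ∧ σ j = p.2).card
        = Nat.factorial n := by
    have := Finset.card_eq_sum_card_fiberwise
      (f := fun σ : Equiv.Perm (Fin n) => (σ i, σ j))
      (s := Finset.univ) (t := (Finset.univ : Finset (Fin n)).offDiag)
      (fun σ _ => by simp [Finset.mem_offDiag, (σ.injective.ne hij)])
    rw [Finset.card_univ, Fintype.card_perm, Fintype.card_fin] at this
    refine Eq.trans ?_ this.symm
    apply Finset.sum_congr rfl
    intro p _
    congr 1
    ext σ
    simp [Prod.ext_iff]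
  have const : ∀ p ∈ (Finset.univ : Finset (Fin n)).offDiag,
      (Finset.univ.filter fun σ : Equiv.Perm (Fin n) => σ i = p.1 ∧ σ j = p.2).card
        = (Finset.univ.filter fun σ : Equiv.Perm (Fin n) => σ i = a ∧ σ j = b).card := by
    intro p hp
    rw [Finset.mem_offDiag] at hp
    exact fiber_card_eq i j hp.2.2 hab
  rw [Finset.sum_congr rfl const, Finset.sum_const, Finset.offDiag_card,
    Finset.card_univ, Fintype.card_fin, smul_eq_mul] at key
  have hfac : (n * n - n) * Nat.factorial (n - 2) = Nat.factorial n := by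
    obtain ⟨m, rfl⟩ : ∃ m, n = m + 2 := ⟨n - 2, by omega⟩
    have : (m + 2) * (m + 2) - (m + 2) = (m + 2) * (m + 1) := by ring_nf; omega
    rw [this]
    simp [Nat.factorial_succ]
    ring
  have hpos : 0 < n * n - n := by
    have h2 : 2 * n ≤ n * n := Nat.mul_le_mul_right n hn
    omega
  have heq := key.trans hfac.symm
  exact Nat.eq_of_mul_eq_mul_left hpos heq

lemma sum_perm_pair {n : ℕ} {i j : Fin n} (hij : i ≠ j) (f : Fin n → Fin n → ℕ) :
    ∑ σ : Equiv.Perm (Fin n), f (σ i) (σ j)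
      = Nat.factorial (n - 2) * ∑ p ∈ (Finset.univ : Finset (Fin n)).offDiag, f p.1 p.2 := by
  have h := Finset.sum_fiberwise_of_maps_to
    (g := fun σ : Equiv.Perm (Fin n) => (σ i, σ j))
    (s := (Finset.univ : Finset (Equiv.Perm (Fin n))))
    (t := (Finset.univ : Finset (Fin n)).offDiag)
    (fun σ _ => by simp [Finset.mem_offDiag, σ.injective.ne hij])
    (fun σ => f (σ i) (σ j))
  rw [← h, Finset.mul_sum]
  apply Finset.sum_congr rfl
  intro p _
  have : ∀ σ ∈ Finset.univ.filter (fun σ : Equiv.Perm (Fin n) => (σ i, σ j) = p),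
      f (σ i) (σ j) = f p.1 p.2 := by
    intro σ hσ
    simp only [Finset.mem_filter, Prod.ext_iff] at hσ
    rw [hσ.2.1, hσ.2.2]
  rw [Finset.sum_congr rfl this, Finset.sum_const, smul_eq_mul]
  congr 1
  have hp : p.1 ≠ p.2 := by
    have := Finset.mem_offDiag.mp (by assumption)
    exact this.2.2
  rw [← fiber_card hij hp]
  congr 1
  ext σ
  simp [Prod.ext_iff]

lemma koff_eval (n : ℕ) :
    ∑ p ∈ (Finset.univ : Finset (Fin n)).offDiag,
        (if p.2 < p.1 then (p.1 : ℕ) + 1 else 0)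
      = ∑ k ∈ Finset.range n, k * (k + 1) := by
  have hsub : (Finset.univ : Finset (Fin n)).offDiag ⊆ Finset.univ ×ˢ Finset.univ := by
    intro p hp
    simp [Finset.mem_product]
  rw [Finset.sum_subset hsub (by
    intro p _ hp
    have : p.1 = p.2 := by
      by_contra h
      exact hp (Finset.mem_offDiag.mpr ⟨Finset.mem_univ _, Finset.mem_univ _, h⟩)
    simp [this])]
  rw [Finset.sum_product]
  rw [← Fin.sum_univ_eq_sum_range (fun k => k * (k + 1)) n]
  apply Finset.sum_congr rfl
  intro a _
  dsimp only
  rw [← Finset.sum_filter, Finset.sum_const, smul_eq_mul]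
  congr 1
  have : Finset.univ.filter (fun b : Fin n => b < a) = Finset.Iio a := by
    ext b; simp
  rw [this, Fin.card_Iio]

lemma card_P (n : ℕ) :
    (Finset.univ.filter (fun p : Fin n × Fin n => (p.1 : ℕ) + 1 = (p.2 : ℕ))).card
      = n - 1 := by
  rw [← Fintype.card_fin (n - 1), ← Finset.card_univ]
  apply Finset.card_bij (fun (p : Fin n × Fin n) hp =>
    (⟨(p.1 : ℕ), by
      simp only [Finset.mem_filter] at hp
      have := p.2.isLt
      omega⟩ : Fin (n - 1)))
  · intro p hp; exact Finset.mem_univ _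
  · intro p₁ hp₁ p₂ hp₂ h
    simp only [Finset.mem_filter] at hp₁ hp₂
    have h1 : (p₁.1 : ℕ) = (p₂.1 : ℕ) := by simpa using congrArg Fin.val h
    have h2 : (p₁.2 : ℕ) = (p₂.2 : ℕ) := by omega
    exact Prod.ext (Fin.ext h1) (Fin.ext h2)
  · intro k _
    have hk := k.isLt
    refine ⟨(⟨(k : ℕ), by omega⟩, ⟨(k : ℕ) + 1, by omega⟩), ?_, rfl⟩
    simp

/-- The descent-top statistic of a permutation of `[n]` (values 1-indexed):
`dtop w = ∑_{i ∈ Des(w)} w(i)`, where `Des(w)` is the set of indices `i ∈ [n-1]`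
with `w(i) > w(i+1)`. Here `σ : Fin n ≃ Fin n` is 0-indexed, so the value at
position `p.1` is `σ p.1 + 1`. -/
def dtop (n : ℕ) (σ : Equiv.Perm (Fin n)) : ℕ :=
  ∑ p ∈ Finset.univ.filter
      (fun p : Fin n × Fin n => (p.1 : ℕ) + 1 = (p.2 : ℕ) ∧ σ p.2 < σ p.1),
    ((σ p.1 : ℕ) + 1)

/-- For `n ≥ 1`, `∑_{w ∈ S_n} dtop w = (n+1)!(n-1)/3`. -/
theorem total_dtop_over_Sn (n : ℕ) (hn : 1 ≤ n) :
    3 * ∑ σ : Equiv.Perm (Fin n), dtop n σ = Nat.factorial (n + 1) * (n - 1) := by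
  have hdtop : ∀ σ : Equiv.Perm (Fin n), dtop n σ =
      ∑ p ∈ Finset.univ.filter (fun p : Fin n × Fin n => (p.1 : ℕ) + 1 = (p.2 : ℕ)),
        (if σ p.2 < σ p.1 then (σ p.1 : ℕ) + 1 else 0) := by
    intro σ
    rw [dtop, ← Finset.filter_filter, Finset.sum_filter]
  rw [Finset.sum_congr rfl (fun σ _ => hdtop σ), Finset.sum_comm]
  have hP : ∀ p ∈ Finset.univ.filter (fun p : Fin n × Fin n => (p.1 : ℕ) + 1 = (p.2 : ℕ)),
      (∑ σ : Equiv.Perm (Fin n), if σ p.2 < σ p.1 then (σ p.1 : ℕ) + 1 else 0)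
        = Nat.factorial (n - 2) * ∑ q ∈ (Finset.univ : Finset (Fin n)).offDiag,
            (if q.2 < q.1 then (q.1 : ℕ) + 1 else 0) := by
    intro p hp
    simp only [Finset.mem_filter] at hp
    have hne : p.1 ≠ p.2 := by
      intro h
      rw [h] at hp
      omega
    exact sum_perm_pair hne (fun a b => if b < a then (a : ℕ) + 1 else 0)
  rw [Finset.sum_congr rfl hP, Finset.sum_const, smul_eq_mul, card_P, koff_eval]
  have h3 : ∀ m : ℕ, 3 * ∑ k ∈ Finset.range (m + 1), k * (k + 1) = m * (m + 1) * (m + 2) := by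
    intro m
    induction m with
    | zero => simp
    | succ l ih => rw [Finset.sum_range_succ, Nat.mul_add, ih]; ring
  obtain ⟨m, rfl⟩ : ∃ m, n = m + 1 := ⟨n - 1, by omega⟩
  rcases m with _ | l
  · simp
  · have hK := h3 (l + 1)
    norm_num
    calc 3 * ((l + 1) * (Nat.factorial l * ∑ k ∈ Finset.range (l + 1 + 1), k * (k + 1)))
        = (l + 1) * Nat.factorial l * (3 * ∑ k ∈ Finset.range (l + 1 + 1), k * (k + 1)) := by
          ring
      _ = (l + 1) * Nat.factorial l * ((l + 1) * (l + 2) * (l + 3)) := by rw [hK]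
      _ = Nat.factorial (l + 1 + 1 + 1) * (l + 1) := by
          simp [Nat.factorial_succ]; ring
end
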